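/- Gibbs variational principle for matrices: Let H be a Hermitian n × n complex matrix and β > 0, and let ρ_β = exp(−βH)/tr(exp(−βH)) be the thermal state. Then ρ_β minimizes the free energy F(ρ) = Re tr(Hρ) − (1/β)·S(ρ) over all density matrices: for every positive semidefinite matrix ρ with trace 1, Re tr(Hρ_β) − (1/β)·S(ρ_β) ≤ Re tr(Hρ) − (1/β)·S(ρ). -/

import Mathlib

open scoped BigOperators ComplexOrder

section Aux

open Polynomial Matrix

lemma charpoly_conj_diag {n : Type*} [Fintype n] [DecidableEq n]
    (U : Matrix n n ℂ) (hU : U * star U = 1) (d : n → ℂ) :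
    (U * Matrix.diagonal d * star U).charpoly = (Matrix.diagonal d).charpoly := by
  have hmap : U.map C * (star U).map C = 1 := by
    rw [← Matrix.map_mul, hU, Matrix.map_one C (map_zero C) (map_one C)]
  have key : (U * Matrix.diagonal d * star U).charmatrix
      = U.map C * (Matrix.diagonal d).charmatrix * (star U).map C := by
    simp only [Matrix.charmatrix, RingHom.mapMatrix_apply, Matrix.map_mul, Matrix.mul_sub,
      Matrix.sub_mul]
    congr 1
    rw [← (Matrix.scalar_commute (X : ℂ[X]) (fun r => Commute.all _ _) (U.map C)).eq,
      mul_assoc, hmap, mul_one]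
  rw [Matrix.charpoly, key, Matrix.det_mul, Matrix.det_mul, mul_right_comm,
    ← Matrix.det_mul, hmap, Matrix.det_one, one_mul]
  rfl

lemma charpoly_diag_eq {n : Type*} [Fintype n] [DecidableEq n] [LinearOrder n] (d : n → ℂ) :
    (Matrix.diagonal d).charpoly = ∏ i, (X - C (d i)) := by
  rw [Matrix.charpoly_of_upperTriangular _ (Matrix.blockTriangular_diagonal d)]
  simp

lemma multiset_eigs {n : ℕ} {σ : Matrix (Fin n) (Fin n) ℂ} (hσ : σ.IsHermitian)
    (U : Matrix (Fin n) (Fin n) ℂ) (hU : U * star U = 1) (d : Fin n → ℝ)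
    (hσeq : σ = U * Matrix.diagonal (fun i => (d i : ℂ)) * star U)
    (f : ℝ → ℝ) : ∑ i, f (hσ.eigenvalues i) = ∑ i, f (d i) := by
  have hV : (hσ.eigenvectorUnitary : Matrix (Fin n) (Fin n) ℂ) *
      star (hσ.eigenvectorUnitary : Matrix (Fin n) (Fin n) ℂ) = 1 :=
    Matrix.mem_unitaryGroup_iff.mp hσ.eigenvectorUnitary.2
  have h1 : σ.charpoly = ∏ i, (X - C ((hσ.eigenvalues i : ℂ))) := by
    conv_lhs => rw [hσ.spectral_theorem, Unitary.conjStarAlgAut_apply]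
    rw [charpoly_conj_diag _ hV, charpoly_diag_eq]
    rfl
  have h2 : σ.charpoly = ∏ i, (X - C ((d i : ℂ))) := by
    conv_lhs => rw [hσeq]
    rw [charpoly_conj_diag _ hU, charpoly_diag_eq]
  have h3 : (Finset.univ.val.map fun i => ((hσ.eigenvalues i : ℂ)))
      = Finset.univ.val.map fun i => ((d i : ℂ)) := by
    have heq := h1.symm.trans h2
    have e1 : ∀ v : Fin n → ℂ, (∏ i, (X - C (v i)))
        = ((Finset.univ.val.map v).map fun a => X - C a).prod := by
      intro v
      rw [Multiset.map_map]
      rfl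
    rw [e1, e1] at heq
    have := congrArg Polynomial.roots heq
    rwa [roots_multiset_prod_X_sub_C, roots_multiset_prod_X_sub_C] at this
  have h4 : Finset.univ.val.map hσ.eigenvalues = Finset.univ.val.map d := by
    apply Multiset.map_injective Complex.ofReal_injective
    rw [Multiset.map_map, Multiset.map_map]
    exact h3
  calc ∑ i, f (hσ.eigenvalues i) = ((Finset.univ.val.map hσ.eigenvalues).map f).sum := by
        rw [Multiset.map_map]; rfl
    _ = ((Finset.univ.val.map d).map f).sum := by rw [h4]
    _ = ∑ i, f (d i) := by rw [Multiset.map_map]; rfl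

lemma gibbs_pointwise {p r : ℝ} (hp : 0 ≤ p) (hr : 0 < r) :
    p * Real.log r - p * Real.log p ≤ r - p := by
  rcases eq_or_lt_of_le hp with h | h
  · simp [← h, hr.le]
  · have h1 : Real.log (r / p) ≤ r / p - 1 := Real.log_le_sub_one_of_pos (by positivity)
    rw [Real.log_div hr.ne' h.ne'] at h1
    have := mul_le_mul_of_nonneg_left h1 hp
    rw [mul_sub, mul_sub, mul_div_cancel₀ _ h.ne', mul_one] at this
    linarith

lemma jensen_log {n : ℕ} (w x : Fin n → ℝ) (hw : ∀ i, 0 ≤ w i) (hw1 : ∑ i, w i = 1)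
    (hx : ∀ i, 0 < x i) : ∑ i, w i * Real.log (x i) ≤ Real.log (∑ i, w i * x i) := by
  have := (strictConcaveOn_log_Ioi.concaveOn).le_map_sum (t := Finset.univ)
    (w := w) (p := x) (fun i _ => hw i) hw1 (fun i _ => hx i)
  simpa [smul_eq_mul] using this

variable {n : Type*} [Fintype n] [DecidableEq n]

lemma trace_conj_diag (U : Matrix n n ℂ) (hU : star U * U = 1) (v : n → ℂ) :
    (U * Matrix.diagonal v * star U).trace = ∑ i, v i := by
  rw [Matrix.trace_mul_cycle, hU, one_mul, Matrix.trace_diagonal]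

lemma conj_diag_mul (V : Matrix n n ℂ) (hV : star V * V = 1) (v w : n → ℂ) :
    (V * Matrix.diagonal v * star V) * (V * Matrix.diagonal w * star V)
      = V * Matrix.diagonal (fun i => v i * w i) * star V := by
  have e : (V * Matrix.diagonal v * star V) * (V * Matrix.diagonal w * star V)
      = V * Matrix.diagonal v * (star V * V) * Matrix.diagonal w * star V := by
    simp only [mul_assoc]
  rw [e, hV, mul_one, mul_assoc V, Matrix.diagonal_mul_diagonal]

lemma star_ofReal_fun (d : n → ℝ) : (star fun i => ((d i : ℂ))) = fun i => ((d i : ℂ)) :=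
  funext fun i => by rw [Pi.star_apply, Complex.star_def, Complex.conj_ofReal]

lemma isHermitian_conj_diag (V : Matrix n n ℂ) (d : n → ℝ) :
    (V * Matrix.diagonal (fun i => (d i : ℂ)) * star V).IsHermitian := by
  show _ = _
  simp only [Matrix.star_eq_conjTranspose, Matrix.conjTranspose_mul,
    Matrix.conjTranspose_conjTranspose, Matrix.diagonal_conjTranspose]
  rw [show (star fun i => ((d i : ℂ))) = fun i => ((d i : ℂ)) from star_ofReal_fun d, mul_assoc]

lemma trace_two_bases (V U : Matrix n n ℂ) (hV : star V * V = 1) (hU : star U * U = 1)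
    (v w : n → ℂ) :
    ((V * Matrix.diagonal v * star V) * (U * Matrix.diagonal w * star U)).trace
      = ∑ i, ∑ j, v i * w j * (Complex.normSq ((star V * U) i j) : ℂ) := by
  set W := star V * U with hW
  have hV2 : V * star V = 1 := mul_eq_one_comm.mp hV
  have hsW : star W = star U * V := by rw [hW, Matrix.star_mul, star_star]
  have e : (V * Matrix.diagonal v * star V) * (U * Matrix.diagonal w * star U)
      = V * ((Matrix.diagonal v * W * Matrix.diagonal w * star W) * star V) := by
    rw [hsW, hW]
    simp only [mul_assoc, hV2, mul_one]
  rw [e, Matrix.trace_mul_comm, mul_assoc, hV, mul_one]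
  rw [Matrix.trace]
  simp only [Matrix.diag_apply, Matrix.mul_apply, Matrix.diagonal_apply, Matrix.star_apply,
    ite_mul, zero_mul, mul_ite, mul_zero, Finset.sum_ite_eq, Finset.sum_ite_eq',
    Finset.mem_univ, if_true, Complex.star_def]
  refine Finset.sum_congr rfl fun i _ => Finset.sum_congr rfl fun j _ => ?_
  have h := Complex.mul_conj (W i j)
  linear_combination v i * w j * h

end Aux

/-- The von Neumann entropy `S(σ) = −∑ λ_i(σ) log λ_i(σ)` of a Hermitian matrix, via its
(real) eigenvalues; defined to be `0` on non-Hermitian matrices. -/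
noncomputable def vonNeumannEntropy {n : Type*} [Fintype n] [DecidableEq n]
    (σ : Matrix n n ℂ) : ℝ :=
  if h : σ.IsHermitian then ∑ i, Real.negMulLog (h.eigenvalues i) else 0

/-- **Gibbs variational principle for matrices.** For a Hermitian `H` and `β > 0`, the
thermal state `ρ_β = exp(−βH)/tr(exp(−βH))` minimizes the free energy
`F(ρ) = Re tr(Hρ) − (1/β)·S(ρ)` over all density matrices. -/
theorem gibbs_variational_principle (n : ℕ)
    (H : Matrix (Fin n) (Fin n) ℂ) (hH : H.IsHermitian) (β : ℝ) (hβ : 0 < β)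
    (ρβ : Matrix (Fin n) (Fin n) ℂ)
    (hρβ : ρβ = ((NormedSpace.exp ((-(β : ℂ)) • H)).trace)⁻¹ •
      NormedSpace.exp ((-(β : ℂ)) • H)) :
    ∀ ρ : Matrix (Fin n) (Fin n) ℂ, ρ.PosSemidef → ρ.trace = 1 →
      ((H * ρβ).trace).re - (1 / β) * vonNeumannEntropy ρβ ≤
        ((H * ρ).trace).re - (1 / β) * vonNeumannEntropy ρ := by
  intro ρ hρ htr
  rcases Nat.eq_zero_or_pos n with hn | hn
  · exfalso
    have h0 : ρ.trace = 0 := by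
      subst hn
      simp [Matrix.trace]
    rw [htr] at h0
    exact one_ne_zero h0
  haveI : Nonempty (Fin n) := ⟨⟨0, hn⟩⟩
  -- spectral data of H
  set lam := hH.eigenvalues with hlam
  set V : Matrix (Fin n) (Fin n) ℂ := (hH.eigenvectorUnitary : Matrix (Fin n) (Fin n) ℂ) with hVdef
  have hV : star V * V = 1 := Matrix.mem_unitaryGroup_iff'.mp hH.eigenvectorUnitary.2
  have hV2 : V * star V = 1 := Matrix.mem_unitaryGroup_iff.mp hH.eigenvectorUnitary.2
  have hHspec : H = V * Matrix.diagonal (fun i => (lam i : ℂ)) * star V := hH.spectral_theorem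
  -- the exponential
  set g : Fin n → ℝ := fun i => Real.exp (-(β * lam i)) with hg
  have hexp : NormedSpace.exp ((-(β:ℂ)) • H)
      = V * Matrix.diagonal (fun i => (g i : ℂ)) * star V := by
    have h1 : (-(β:ℂ)) • H = V * Matrix.diagonal (fun i => ((-(β * lam i) : ℝ) : ℂ)) * star V := by
      have hfun : ((-(β:ℂ)) • fun i => ((lam i : ℂ))) = fun i => ((-(β * lam i) : ℝ) : ℂ) := by
        funext i
        simp only [Pi.smul_apply, smul_eq_mul]
        push_cast
        ring
      rw [hHspec, ← smul_mul_assoc, ← mul_smul_comm, ← Matrix.diagonal_smul, hfun]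
    have hVinv : V⁻¹ = star V := Matrix.inv_eq_right_inv hV2
    have hVunit : IsUnit V := ⟨⟨V, star V, hV2, hV⟩, rfl⟩
    rw [h1, ← hVinv, Matrix.exp_conj V _ hVunit, Matrix.exp_diagonal, hVinv]
    have hfun2 : (NormedSpace.exp fun i : Fin n => ((-(β * lam i) : ℝ) : ℂ))
        = fun i => ((g i : ℂ)) := by
      rw [Pi.exp_def]
      funext i
      rw [← Complex.exp_eq_exp_ℂ, ← Complex.ofReal_exp]
    rw [hfun2]
  -- partition function
  set Z : ℝ := ∑ i, g i with hZ
  have hZpos : 0 < Z := Finset.sum_pos (fun i _ => Real.exp_pos _) Finset.univ_nonempty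
  have htrE : (NormedSpace.exp ((-(β:ℂ)) • H)).trace = (Z : ℂ) := by
    rw [hexp, trace_conj_diag _ hV, hZ]
    push_cast
    rfl
  set q : Fin n → ℝ := fun i => g i / Z with hq
  have hqpos : ∀ i, 0 < q i := fun i => div_pos (Real.exp_pos _) hZpos
  have hqsum : ∑ i, q i = 1 := by
    rw [hq, ← Finset.sum_div, ← hZ, div_self hZpos.ne']
  have hρβd : ρβ = V * Matrix.diagonal (fun i => (q i : ℂ)) * star V := by
    have hfun3 : ((Z : ℂ))⁻¹ • (fun i => ((g i : ℂ))) = fun i => ((q i : ℂ)) := by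
      funext i
      simp only [Pi.smul_apply, smul_eq_mul, hq]
      push_cast
      field_simp
    rw [hρβ, htrE, hexp, ← smul_mul_assoc, ← mul_smul_comm, ← Matrix.diagonal_smul, hfun3]
  have hρβH : ρβ.IsHermitian := hρβd ▸ isHermitian_conj_diag V q
  -- entropy of ρβ
  have hSβ : vonNeumannEntropy ρβ = ∑ i, Real.negMulLog (q i) := by
    rw [vonNeumannEntropy, dif_pos hρβH]
    exact multiset_eigs hρβH V hV2 q hρβd Real.negMulLog
  -- energy of ρβ
  have hEβ : ((H * ρβ).trace).re = ∑ i, lam i * q i := by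
    rw [hHspec, hρβd, conj_diag_mul V hV, trace_conj_diag _ hV]
    push_cast
    rw [Complex.re_sum]
    exact Finset.sum_congr rfl fun i _ => by
      rw [← Complex.ofReal_mul, Complex.ofReal_re]
  -- spectral data of ρ
  set p := hρ.1.eigenvalues with hp
  set U : Matrix (Fin n) (Fin n) ℂ := (hρ.1.eigenvectorUnitary : Matrix (Fin n) (Fin n) ℂ)
    with hUdef
  have hU : star U * U = 1 := Matrix.mem_unitaryGroup_iff'.mp hρ.1.eigenvectorUnitary.2
  have hU2 : U * star U = 1 := Matrix.mem_unitaryGroup_iff.mp hρ.1.eigenvectorUnitary.2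
  have hρspec : ρ = U * Matrix.diagonal (fun i => (p i : ℂ)) * star U := hρ.1.spectral_theorem
  have hpnn : ∀ i, 0 ≤ p i := fun i => hρ.eigenvalues_nonneg i
  have hpsum : ∑ i, p i = 1 := by
    have h1 : ρ.trace = (↑(∑ i, p i) : ℂ) := by
      rw [hρspec, trace_conj_diag _ hU]
      push_cast
      rfl
    rw [htr] at h1
    exact_mod_cast h1.symm
  have hSρ : vonNeumannEntropy ρ = ∑ i, Real.negMulLog (p i) := by
    rw [vonNeumannEntropy, dif_pos hρ.1]
  -- energy of ρ
  set W : Matrix (Fin n) (Fin n) ℂ := star V * U with hW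
  set P : Fin n → Fin n → ℝ := fun i j => Complex.normSq (W i j) with hP
  have hPnn : ∀ i j, 0 ≤ P i j := fun i j => Complex.normSq_nonneg _
  have hEρ : ((H * ρ).trace).re = ∑ i, ∑ j, lam i * p j * P i j := by
    rw [hHspec, hρspec, trace_two_bases V U hV hU]
    rw [Complex.re_sum]
    refine Finset.sum_congr rfl fun i _ => ?_
    rw [Complex.re_sum]
    refine Finset.sum_congr rfl fun j _ => ?_
    rw [← Complex.ofReal_mul, ← Complex.ofReal_mul, Complex.ofReal_re]
  -- row and column sums of P
  have hWW : W * star W = 1 := by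
    rw [hW, Matrix.star_mul, star_star]
    have e : star V * U * (star U * V) = star V * (U * star U) * V := by
      simp only [mul_assoc]
    rw [e, hU2, mul_one, hV]
  have hWW' : star W * W = 1 := mul_eq_one_comm.mp hWW
  have hProw : ∀ i, ∑ j, P i j = 1 := by
    intro i
    have h0 : (W * star W) i i = 1 := by rw [hWW, Matrix.one_apply_eq]
    rw [Matrix.mul_apply] at h0
    have h2 : ∑ j, ((P i j : ℝ) : ℂ) = 1 := by
      rw [← h0]
      refine Finset.sum_congr rfl fun j _ => ?_
      rw [Matrix.star_apply, Complex.star_def, Complex.mul_conj]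
    exact_mod_cast h2
  have hPcol : ∀ j, ∑ i, P i j = 1 := by
    intro j
    have h0 : (star W * W) j j = 1 := by rw [hWW', Matrix.one_apply_eq]
    rw [Matrix.mul_apply] at h0
    have h2 : ∑ i, ((P i j : ℝ) : ℂ) = 1 := by
      rw [← h0]
      refine Finset.sum_congr rfl fun i _ => ?_
      rw [Matrix.star_apply, Complex.star_def, mul_comm, Complex.mul_conj]
    exact_mod_cast h2
  -- logs of q
  have hlogq : ∀ i, Real.log (q i) = -(β * lam i) - Real.log Z := by
    intro i
    have hqi : q i = Real.exp (-(β * lam i)) / Z := rfl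
    rw [hqi, Real.log_div (Real.exp_ne_zero _) hZpos.ne', Real.log_exp]
  rw [hSβ, hEβ, hSρ, hEρ]
  set T := ∑ i, ∑ j, lam i * p j * P i j with hT
  set S := ∑ i, Real.negMulLog (p i) with hS
  have hLHS : ∑ i, lam i * q i - 1 / β * ∑ i, Real.negMulLog (q i)
      = -(1/β) * Real.log Z := by
    have h1 : ∑ i, Real.negMulLog (q i) = β * (∑ i, lam i * q i) + Real.log Z := by
      have h2 : ∀ i, Real.negMulLog (q i) = β * (lam i * q i) + q i * Real.log Z := by
        intro i
        rw [Real.negMulLog, hlogq i]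
        ring
      rw [Finset.sum_congr rfl fun i _ => h2 i, Finset.sum_add_distrib, ← Finset.mul_sum,
        ← Finset.sum_mul, hqsum, one_mul]
    rw [h1]
    field_simp
    ring
  -- the mixed distribution r
  set r : Fin n → ℝ := fun j => ∑ i, P i j * q i with hr
  have hrpos : ∀ j, 0 < r j := by
    intro j
    have hne : ∑ i, P i j ≠ 0 := by rw [hPcol j]; norm_num
    obtain ⟨i, _, hi⟩ := Finset.exists_ne_zero_of_sum_ne_zero hne
    have h1 : 0 < P i j * q i := mul_pos ((hPnn i j).lt_of_ne (Ne.symm hi)) (hqpos i)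
    exact h1.trans_le (Finset.single_le_sum
      (fun k _ => mul_nonneg (hPnn k j) (hqpos k).le) (Finset.mem_univ i))
  have hrsum : ∑ j, r j = 1 := by
    calc ∑ j, r j = ∑ i, ∑ j, P i j * q i := Finset.sum_comm
      _ = ∑ i, (∑ j, P i j) * q i :=
          Finset.sum_congr rfl fun i _ => (Finset.sum_mul _ _ _).symm
      _ = ∑ i, q i := Finset.sum_congr rfl fun i _ => by rw [hProw i, one_mul]
      _ = 1 := hqsum
  have hJ : ∀ j, ∑ i, P i j * Real.log (q i) ≤ Real.log (r j) :=
    fun j => jensen_log (fun i => P i j) q (fun i => hPnn i j) (hPcol j) hqpos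
  -- rewrite β T + log Z
  have e1 : ∀ j, β * (∑ i, lam i * p j * P i j)
      = -(p j * (∑ i, P i j * Real.log (q i))) - p j * Real.log Z := by
    intro j
    have c1 : ∀ i, β * (lam i * p j * P i j)
        = (-(Real.log (q i)) - Real.log Z) * (p j * P i j) := by
      intro i
      have hb : β * lam i = -Real.log (q i) - Real.log Z := by linarith [hlogq i]
      calc β * (lam i * p j * P i j) = (β * lam i) * (p j * P i j) := by ring
        _ = (-(Real.log (q i)) - Real.log Z) * (p j * P i j) := by rw [hb]
    calc β * (∑ i, lam i * p j * P i j)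
        = ∑ i, (-(Real.log (q i)) - Real.log Z) * (p j * P i j) := by
          rw [Finset.mul_sum]; exact Finset.sum_congr rfl fun i _ => c1 i
      _ = ∑ i, (-(p j * (P i j * Real.log (q i))) - (p j * Real.log Z) * P i j) :=
          Finset.sum_congr rfl fun i _ => by ring
      _ = -(p j * (∑ i, P i j * Real.log (q i))) - p j * Real.log Z := by
          rw [Finset.sum_sub_distrib, Finset.sum_neg_distrib, ← Finset.mul_sum,
            ← Finset.mul_sum, hPcol j, mul_one]
  have hkey2 : β * T + Real.log Z = ∑ j, -(p j * (∑ i, P i j * Real.log (q i))) := by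
    have hTswap : T = ∑ j, ∑ i, lam i * p j * P i j := Finset.sum_comm
    rw [hTswap, Finset.mul_sum, Finset.sum_congr rfl fun j _ => e1 j, Finset.sum_sub_distrib,
      ← Finset.sum_mul, hpsum, one_mul]
    ring
  have hub : S ≤ β * T + Real.log Z := by
    rw [hkey2, hS]
    have hper : ∀ j, Real.negMulLog (p j)
        ≤ -(p j * (∑ i, P i j * Real.log (q i))) + (r j - p j) := by
      intro j
      have h1 : p j * (∑ i, P i j * Real.log (q i)) ≤ p j * Real.log (r j) :=
        mul_le_mul_of_nonneg_left (hJ j) (hpnn j)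
      have h2 : p j * Real.log (r j) - p j * Real.log (p j) ≤ r j - p j :=
        gibbs_pointwise (hpnn j) (hrpos j)
      rw [Real.negMulLog]
      linarith
    calc ∑ j, Real.negMulLog (p j)
        ≤ ∑ j, (-(p j * (∑ i, P i j * Real.log (q i))) + (r j - p j)) :=
          Finset.sum_le_sum fun j _ => hper j
      _ = ∑ j, -(p j * (∑ i, P i j * Real.log (q i))) + (∑ j, r j - ∑ j, p j) := by
          rw [Finset.sum_add_distrib, Finset.sum_sub_distrib]
      _ = ∑ j, -(p j * (∑ i, P i j * Real.log (q i))) := by rw [hrsum, hpsum]; ring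
  have hfin := mul_le_mul_of_nonneg_left hub (le_of_lt (one_div_pos.mpr hβ))
  have heq2 : (1/β) * (β * T + Real.log Z) = T + (1/β) * Real.log Z := by
    field_simp
  linarith [hLHS]
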